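/- Let X be a path-connected topological space and x₀ ∈ X. Let C_*(X) be the singular chain complex and C_*^{x₀}(X) the subcomplex generated by simplices mapping all vertices of Δ^k to x₀. Then there is a chain map η_* : C_*(X) → C_*^{x₀}(X) with η ∘ ι = id (where ι is the inclusion) and a chain homotopy s_* : C_*(X) → C_{*+1}(X) with ∂s + s∂ = ι η − id. Moreover, η_k maps each simplex to a single simplex and s_k maps each k-simplex to a sum of at most k+1 simplices. -/

import Mathlib

open scoped Classical

open SimplexCategory CategoryTheory

noncomputable def Del (n : ℕ) : TopCat := SimplexCategory.toTop₀.obj (SimplexCategory.mk n)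

noncomputable def face {X : TopCat} {n : ℕ} (j : Fin (n + 2)) (σ : C(Del (n+1), X)) :
    C(Del n, X) :=
  σ.comp (SimplexCategory.toTop₀.map (SimplexCategory.δ j)).hom

noncomputable def vert {n : ℕ} (j : Fin (n + 1)) : Del n :=
  ⟨fun i => if i = j then 1 else 0, by
    show (fun i => if i = j then (1 : ℝ) else 0) ∈ stdSimplex ℝ (Fin (n + 1))
    exact ⟨fun i => by dsimp only; split_ifs <;> norm_num, by simp [Finset.sum_ite_eq']⟩⟩

noncomputable def bdry (X : TopCat) (n : ℕ) (c : C(Del (n+1), X) →₀ ℝ) :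
    C(Del n, X) →₀ ℝ :=
  ∑ j : Fin (n + 2), ((-1 : ℝ) ^ (j : ℕ)) • Finsupp.mapDomain (face j) c

/-- The singular boundary operator on integral singular chains. -/
noncomputable def bdryZ (X : TopCat) (n : ℕ) (c : C(Del (n+1), X) →₀ ℤ) :
    C(Del n, X) →₀ ℤ :=
  ∑ j : Fin (n + 2), ((-1 : ℤ) ^ (j : ℕ)) • Finsupp.mapDomain (face j) c

namespace Eil

abbrev UI : Type := unitInterval

noncomputable section

/-! ### Coordinates on `Del` -/

lemma Del.ext {n : ℕ} {y z : Del n} (h : ∀ i : Fin (n+1), y.1 i = z.1 i) : y = z :=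
  Subtype.ext (funext h)

lemma Del.sum_coords {n : ℕ} (y : Del n) : ∑ i : Fin (n+1), y.1 i = 1 := y.2.2

lemma Del.nonneg {n : ℕ} (y : Del n) (i : Fin (n+1)) : 0 ≤ y.1 i := y.2.1 i

lemma Del.continuous_coord {n : ℕ} (i : Fin (n+1)) :
    Continuous (fun y : Del n => y.1 i) :=
  (continuous_apply i).comp continuous_subtype_val

lemma vert_coord {n : ℕ} (j i : Fin (n+1)) :
    (vert j).1 i = if i = j then 1 else 0 := by
  by_cases h : i = j <;> simp [vert, h]

instance : Subsingleton (Del 0) := by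
  constructor
  intro y z
  apply Del.ext
  intro i
  have hy := Del.sum_coords y
  have hz := Del.sum_coords z
  fin_cases i
  simpa using hy.trans hz.symm

/-! ### The coface maps -/

/-- The `j`-th coface map as a bundled continuous map. -/
def mapδ {n : ℕ} (j : Fin (n+2)) : C(Del n, Del (n+1)) :=
  (SimplexCategory.toTop₀.map (SimplexCategory.δ j)).hom

lemma face_eq_comp {X : TopCat} {n : ℕ} (j : Fin (n + 2)) (σ : C(Del (n+1), X)) :
    face j σ = σ.comp (mapδ j) := rfl

lemma mapδ_coord_eq_sum {n : ℕ} (j : Fin (n+2)) (y : Del n) (k : Fin (n+2)) :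
    (mapδ j y).1 k = ∑ a : Fin (n+1), if j.succAbove a = k then y.1 a else 0 := by
  have h1 := FunOnFinite.linearMap_apply_apply (R := ℝ) (M := ℝ) (δ j) y.1 k
  rw [show (mapδ j y).1 k = FunOnFinite.linearMap ℝ ℝ (δ j) y.1 k from rfl, h1, Finset.sum_filter]
  exact Finset.sum_congr rfl fun a _ => if_congr Iff.rfl rfl rfl

lemma mapδ_self {n : ℕ} (j : Fin (n+2)) (y : Del n) : (mapδ j y).1 j = 0 := by
  rw [mapδ_coord_eq_sum]
  apply Finset.sum_eq_zero
  intro a _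
  simp [Fin.succAbove_ne j a]

lemma mapδ_succAbove {n : ℕ} (j : Fin (n+2)) (y : Del n) (a : Fin (n+1)) :
    (mapδ j y).1 (j.succAbove a) = y.1 a := by
  rw [mapδ_coord_eq_sum]
  calc (∑ b : Fin (n+1), if j.succAbove b = j.succAbove a then y.1 b else 0)
      = ∑ b : Fin (n+1), if b = a then y.1 b else 0 := by
        refine Finset.sum_congr rfl (fun b _ => ?_)
        by_cases h : b = a
        · rw [if_pos h, if_pos (by rw [h])]
        · rw [if_neg h, if_neg (fun hc => h (j.succAbove_right_injective hc))]
    _ = y.1 a := by simp [Finset.sum_ite_eq']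

lemma val_succAbove {n : ℕ} (j : Fin (n+2)) (a : Fin (n+1)) :
    ((j.succAbove a : Fin (n+2)) : ℕ) = if (a : ℕ) < (j : ℕ) then (a : ℕ) else (a : ℕ) + 1 := by
  rw [Fin.succAbove]
  simp only [Fin.lt_def, Fin.coe_castSucc]
  split_ifs with h
  · rfl
  · rfl

/-- ℕ-indexed coordinate formula for the coface map. -/
lemma mapδ_coord {n : ℕ} (j : Fin (n+2)) (y : Del n) (k : Fin (n+2)) :
    (mapδ j y).1 k =
      if h : (k : ℕ) < (j : ℕ) then y.1 ⟨k, by have := k.isLt; have := j.isLt; first | omega | (simp only [SimplexCategory.len_mk]; omega)⟩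
      else if h2 : (k : ℕ) = (j : ℕ) then 0
      else y.1 ⟨(k : ℕ) - 1, by have := k.isLt; first | omega | (simp only [SimplexCategory.len_mk]; omega)⟩ := by
  have hk : (k : ℕ) < n + 2 := k.isLt
  have hj : (j : ℕ) < n + 2 := j.isLt
  split_ifs with h h2
  · have heq : j.succAbove ⟨(k : ℕ), by have := k.isLt; have := j.isLt; first | omega | (simp only [SimplexCategory.len_mk]; omega)⟩ = k := by
      apply Fin.ext; rw [val_succAbove]
      show (if (k:ℕ) < (j:ℕ) then (k:ℕ) else (k:ℕ)+1) = (k:ℕ)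
      rw [if_pos h]
    conv_lhs => rw [← heq]
    rw [mapδ_succAbove]
  · have : k = j := Fin.ext h2
    rw [this, mapδ_self]
  · have heq : j.succAbove ⟨(k : ℕ) - 1, by have := k.isLt; first | omega | (simp only [SimplexCategory.len_mk]; omega)⟩ = k := by
      apply Fin.ext; rw [val_succAbove]
      show (if (k:ℕ) - 1 < (j:ℕ) then (k:ℕ) - 1 else (k:ℕ) - 1 + 1) = (k:ℕ)
      rw [if_neg (by omega)]
      omega
    conv_lhs => rw [← heq]
    rw [mapδ_succAbove]

lemma coord_congr {n : ℕ} (y : Del n) {a b : Fin (n+1)} (h : (a : ℕ) = (b : ℕ)) :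
    y.1 a = y.1 b := by
  have : a = b := Fin.ext h
  rw [this]

/-- Summation against the coordinates of `mapδ j y`. -/
lemma sum_mapδ {n : ℕ} {M : Type*} [AddCommMonoid M] (j : Fin (n+2)) (y : Del n)
    (g : Fin (n+2) → ℝ → M) (hg : ∀ k, g k 0 = 0) :
    ∑ k : Fin (n+2), g k ((mapδ j y).1 k) = ∑ a : Fin (n+1), g (j.succAbove a) (y.1 a) := by
  rw [Fin.sum_univ_succAbove (fun k => g k ((mapδ j y).1 k)) j, mapδ_self, hg, zero_add]
  exact Finset.sum_congr rfl fun a _ => by rw [mapδ_succAbove]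

lemma mapδ_vert {n : ℕ} (j : Fin (n+2)) (a : Fin (n+1)) :
    mapδ j (vert a) = vert (j.succAbove a) := by
  apply Del.ext
  intro k
  rcases eq_or_ne k j with hk | hk
  · subst hk
    rw [mapδ_self, vert_coord, if_neg (Fin.succAbove_ne k a).symm]
  · obtain ⟨b, hb⟩ := Fin.exists_succAbove_eq hk
    rw [← hb, mapδ_succAbove, vert_coord, vert_coord]
    by_cases h : b = a
    · simp [h]
    · rw [if_neg h, if_neg (fun hc => h (j.succAbove_right_injective hc))]

/-! ### Dropping a zero coordinate -/

/-- Inverse to `mapδ j` on the set where the `j`-th coordinate vanishes. -/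
def dropF {n : ℕ} (j : Fin (n+2)) (y : Del (n+1)) (hy : y.1 j = 0) : Del n :=
  ⟨fun a => y.1 (j.succAbove a), by
    show (fun a => y.1 (j.succAbove a)) ∈ stdSimplex ℝ (Fin (n + 1))
    refine ⟨fun a => Del.nonneg y _, ?_⟩
    show ∑ a : Fin (n+1), y.1 (j.succAbove a) = 1
    have h2 := Fin.sum_univ_succAbove (fun k : Fin (n+2) => y.1 k) j
    rw [Del.sum_coords y, hy, zero_add] at h2
    exact h2.symm⟩

lemma dropF_coord {n : ℕ} (j : Fin (n+2)) (y : Del (n+1)) (hy : y.1 j = 0) (a : Fin (n+1)) :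
    (dropF j y hy).1 a = y.1 (j.succAbove a) := rfl

lemma dropF_mapδ {n : ℕ} (j : Fin (n+2)) (z : Del n) (h : (mapδ j z).1 j = 0) :
    dropF j (mapδ j z) h = z := by
  apply Del.ext
  intro a
  rw [dropF_coord, mapδ_succAbove]

lemma mapδ_dropF {n : ℕ} (j : Fin (n+2)) (y : Del (n+1)) (hy : y.1 j = 0) :
    mapδ j (dropF j y hy) = y := by
  apply Del.ext
  intro k
  rcases eq_or_ne k j with hk | hk
  · subst hk; rw [mapδ_self, hy]
  · obtain ⟨b, hb⟩ := Fin.exists_succAbove_eq hk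
    rw [← hb, mapδ_succAbove, dropF_coord]

lemma dropF_congr {n : ℕ} (j : Fin (n+2)) (y y' : Del (n+1)) (h : y = y')
    (hy : y.1 j = 0) (hy' : y'.1 j = 0) : dropF j y hy = dropF j y' hy' := by
  subst h; rfl

end

end Eil


namespace Eil

noncomputable section

/-! ### The retraction of the prism onto bottom-and-sides -/

/-- denominator function for the radial retraction -/
def Dfun (n : ℕ) (p : Del n × UI) : ℝ :=
  max ((2 - (p.2 : ℝ)) / 2)
    (Finset.univ.sup' (Finset.univ_nonempty) (fun i : Fin (n+1) => 1 - (n+1) * (p.1.1 i : ℝ)))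

lemma Dfun_pos (n : ℕ) (p : Del n × UI) : 0 < Dfun n p := by
  have h1 := unitInterval.le_one p.2
  have : (0:ℝ) < (2 - (p.2 : ℝ)) / 2 := by linarith
  exact lt_max_of_lt_left this

lemma Dfun_le_one (n : ℕ) (p : Del n × UI) : Dfun n p ≤ 1 := by
  apply max_le
  · have := unitInterval.nonneg p.2
    linarith
  · apply Finset.sup'_le
    intro i _
    have : (0:ℝ) ≤ (p.1.1 i : ℝ) := Del.nonneg p.1 i
    have hn : (0:ℝ) ≤ (n+1 : ℝ) := by positivity
    nlinarith

lemma Dfun_ne_zero (n : ℕ) (p : Del n × UI) : Dfun n p ≠ 0 := ne_of_gt (Dfun_pos n p)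

lemma continuous_Dfun (n : ℕ) : Continuous (Dfun n) := by
  apply Continuous.max
  · fun_prop
  · apply Continuous.finset_sup'_apply (Finset.univ_nonempty)
    intro i _
    have h : Continuous fun p : Del n × UI => (p.1.1 i : ℝ) :=
      (Del.continuous_coord i).comp continuous_fst
    continuity

lemma le_Dfun (n : ℕ) (p : Del n × UI) (i : Fin (n+1)) :
    1 - (n+1) * (p.1.1 i : ℝ) ≤ Dfun n p := by
  refine le_max_of_le_right ?_
  exact Finset.le_sup' (fun i : Fin (n+1) => 1 - (n+1) * (p.1.1 i : ℝ)) (Finset.mem_univ i)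

lemma half_le_Dfun (n : ℕ) (p : Del n × UI) : (2 - (p.2 : ℝ)) / 2 ≤ Dfun n p := le_max_left _ _

lemma rho_aux_nonneg (n : ℕ) (p : Del n × UI) (i : Fin (n+1)) :
    0 ≤ (1 - 1 / Dfun n p) / (n+1) + (p.1.1 i : ℝ) / Dfun n p := by
  have hD := Dfun_pos n p
  have hle := le_Dfun n p i
  have key : (1 - (n+1) * (p.1.1 i : ℝ)) / Dfun n p ≤ 1 := by
    rw [div_le_one hD]
    exact hle
  have hn : (0:ℝ) < (n+1 : ℝ) := by positivity
  have expand : (1 - 1 / Dfun n p) / (n+1) + (p.1.1 i : ℝ) / Dfun n p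
      = (1 - (1 - (n+1) * (p.1.1 i : ℝ)) / Dfun n p) / (n+1) := by
    field_simp
    ring
  rw [expand]
  apply div_nonneg _ (le_of_lt hn)
  linarith

/-- the radial retraction of `Δⁿ × I` towards `(Δⁿ × {0}) ∪ (∂Δⁿ × I)`. -/
def rho (n : ℕ) : C(Del n × UI, Del n × UI) := by
  refine ⟨fun p => (⟨fun i => ((1 - 1 / Dfun n p) / (n+1) + (p.1.1 i : ℝ) / Dfun n p), ?_⟩,
    ⟨2 - (2 - (p.2 : ℝ)) / Dfun n p, ?_, ?_⟩), ?_⟩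
  · -- sum of coordinates is 1
    show (fun i => ((1 - 1 / Dfun n p) / (n+1) + (p.1.1 i : ℝ) / Dfun n p)) ∈ stdSimplex ℝ (Fin (n + 1))
    refine ⟨fun i => rho_aux_nonneg n p i, ?_⟩
    show ∑ i : Fin (n+1), ((1 - 1 / Dfun n p) / (n+1) + (p.1.1 i : ℝ) / Dfun n p) = 1
    have hD := Dfun_pos n p
    rw [Finset.sum_add_distrib, Finset.sum_const, Finset.card_univ, Fintype.card_fin]
    have hsum : ∑ i : Fin (n+1), (p.1.1 i : ℝ) = 1 := by
      exact Del.sum_coords p.1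
    rw [← Finset.sum_div, hsum, nsmul_eq_mul]
    push_cast
    field_simp
    ring
  · -- 0 ≤ t'
    have hD := Dfun_pos n p
    have h2 := half_le_Dfun n p
    have : (2 - (p.2 : ℝ)) / Dfun n p ≤ 2 := by
      rw [div_le_iff₀ hD]
      linarith
    linarith
  · -- t' ≤ 1
    have hD := Dfun_pos n p
    have h1 := Dfun_le_one n p
    have ht := unitInterval.le_one p.2
    have : 1 ≤ (2 - (p.2 : ℝ)) / Dfun n p := by
      rw [le_div_iff₀ hD]
      linarith
    linarith
  · -- continuity
    apply Continuous.prodMk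
    · apply Continuous.subtype_mk
      apply continuous_pi
      intro i
      have h : Continuous fun p : Del n × UI => (p.1.1 i : ℝ) :=
        (Del.continuous_coord i).comp continuous_fst
      have hC := continuous_Dfun n
      have hne := Dfun_ne_zero n
      fun_prop (disch := intros; exact hne _)
    · apply Continuous.subtype_mk
      have hC := continuous_Dfun n
      have hne := Dfun_ne_zero n
      fun_prop (disch := intros; exact hne _)

lemma rho_fst_coord (n : ℕ) (p : Del n × UI) (i : Fin (n+1)) :
    ((rho n p).1.1 i : ℝ) = (1 - 1 / Dfun n p) / (n+1) + (p.1.1 i : ℝ) / Dfun n p :=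
  rfl

lemma rho_snd (n : ℕ) (p : Del n × UI) :
    ((rho n p).2 : ℝ) = 2 - (2 - (p.2 : ℝ)) / Dfun n p := rfl

lemma rho_of_D_eq_one {n : ℕ} {p : Del n × UI} (h : Dfun n p = 1) : rho n p = p := by
  apply Prod.ext
  · apply Del.ext
    intro i
    rw [rho_fst_coord, h]
    simp
  · apply Subtype.ext
    rw [rho_snd, h]
    ring

lemma Dfun_eq_one_of_t0 {n : ℕ} {p : Del n × UI} (h : (p.2 : ℝ) = 0) : Dfun n p = 1 := by
  apply le_antisymm (Dfun_le_one n p)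
  have : (2 - (p.2 : ℝ)) / 2 = 1 := by rw [h]; norm_num
  rw [← this]
  exact half_le_Dfun n p

lemma Dfun_eq_one_of_coord0 {n : ℕ} {p : Del n × UI} {i : Fin (n+1)} (h : p.1.1 i = 0) :
    Dfun n p = 1 := by
  apply le_antisymm (Dfun_le_one n p)
  have h' : (p.1.1 i : ℝ) = 0 := h
  have := le_Dfun n p i
  rw [h'] at this
  simpa using this

lemma rho_fix_t0 {n : ℕ} {p : Del n × UI} (h : (p.2 : ℝ) = 0) : rho n p = p :=
  rho_of_D_eq_one (Dfun_eq_one_of_t0 h)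

lemma rho_fix_coord0 {n : ℕ} {p : Del n × UI} {i : Fin (n+1)} (h : p.1.1 i = 0) : rho n p = p :=
  rho_of_D_eq_one (Dfun_eq_one_of_coord0 h)

/-- the retraction lands in bottom-or-sides. -/
lemma rho_exit (n : ℕ) (p : Del n × UI) :
    ((rho n p).2 : ℝ) = 0 ∨ ∃ i, (rho n p).1.1 i = 0 := by
  rcases max_choice ((2 - (p.2 : ℝ)) / 2)
    (Finset.univ.sup' (Finset.univ_nonempty) (fun i : Fin (n+1) => 1 - (n+1) * (p.1.1 i : ℝ)))
    with h | h
  · left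
    have ht := unitInterval.le_one p.2
    rw [rho_snd, show Dfun n p = (2 - (p.2 : ℝ)) / 2 from h]
    have h2 : (2 - (p.2 : ℝ)) ≠ 0 := by linarith
    field_simp
    ring
  · right
    obtain ⟨i, _, hi⟩ := Finset.exists_mem_eq_sup' (Finset.univ_nonempty)
      (fun i : Fin (n+1) => 1 - (n+1) * (p.1.1 i : ℝ))
    refine ⟨i, ?_⟩
    have hD : Dfun n p = 1 - (n+1) * (p.1.1 i : ℝ) := by
      rw [show Dfun n p = _ from h, hi]
    have hDpos := Dfun_pos n p
    have hn : (0:ℝ) < (n+1 : ℝ) := by positivity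
    have hzero : (1 - 1 / Dfun n p) / (n+1) + (p.1.1 i : ℝ) / Dfun n p = 0 := by
      rw [hD] at hDpos ⊢
      field_simp
      ring
    rw [rho_fst_coord, hzero]

end

end Eil


namespace Eil

noncomputable section

variable {X : TopCat}

/-! ### Pointedness -/

def Pointed (x₀ : X) {n : ℕ} (σ : C(Del n, X)) : Prop := ∀ j : Fin (n+1), σ (vert j) = x₀

lemma Pointed.face {x₀ : X} {n : ℕ} {σ : C(Del (n+1), X)} (h : Pointed x₀ σ) (j : Fin (n+2)) :
    Pointed x₀ (face j σ) := by
  intro a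
  show σ (mapδ j (vert a)) = x₀
  rw [mapδ_vert]
  exact h _

/-! ### Systems of homotopies -/

structure Ok (x₀ : X) (n : ℕ) (H : C(Del n, X) → C(Del n × UI, X)) : Prop where
  h0 : ∀ (σ : C(Del n, X)) (x : Del n), H σ (x, 0) = σ x
  hpt : ∀ (σ : C(Del n, X)), Pointed x₀ σ → ∀ p, H σ p = σ p.1
  hv : ∀ (σ : C(Del n, X)) (j : Fin (n+1)), H σ (vert j, 1) = x₀

def Compat (n : ℕ) (Hl : C(Del n, X) → C(Del n × UI, X))
    (Hh : C(Del (n+1), X) → C(Del (n+1) × UI, X)) : Prop :=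
  ∀ (σ : C(Del (n+1), X)) (j : Fin (n+2)) (y : Del n) (t : UI),
    Hh σ (mapδ j y, t) = Hl (face j σ) (y, t)

def Wd (n : ℕ) (H : C(Del n, X) → C(Del n × UI, X)) : Prop :=
  ∀ (σ : C(Del (n+1), X)) (y : Del (n+1)) (t : UI) (i j : Fin (n+2))
    (hi : y.1 i = 0) (hj : y.1 j = 0),
    H (face i σ) (dropF i y hi, t) = H (face j σ) (dropF j y hj, t)

/-! ### Base level -/

def gamma [PathConnectedSpace X] (x₀ x : X) : Path x x₀ :=
  if h : x = x₀ then (Path.refl x₀).cast h rfl else PathConnectedSpace.somePath x x₀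

lemma gamma_zero [PathConnectedSpace X] (x₀ x : X) : gamma x₀ x 0 = x := Path.source _

lemma gamma_one [PathConnectedSpace X] (x₀ x : X) : gamma x₀ x 1 = x₀ := Path.target _

lemma gamma_base [PathConnectedSpace X] (x₀ : X) (t : UI) : gamma x₀ x₀ t = x₀ := by
  rw [gamma, dif_pos rfl]
  simp

def H0 [PathConnectedSpace X] (x₀ : X) (σ : C(Del 0, X)) : C(Del 0 × UI, X) := by
  refine ⟨fun p => gamma x₀ (σ p.1) p.2, ?_⟩
  have h : (fun p : Del 0 × UI => gamma x₀ (σ p.1) p.2)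
      = fun p => gamma x₀ (σ (vert 0)) p.2 := by
    funext p
    rw [Subsingleton.elim p.1 (vert 0)]
  rw [h]
  exact (gamma x₀ (σ (vert 0))).continuous.comp continuous_snd

lemma Ok0 [PathConnectedSpace X] (x₀ : X) : Ok x₀ 0 (H0 x₀) where
  h0 σ x := gamma_zero x₀ (σ x)
  hpt σ h p := by
    show gamma x₀ (σ p.1) p.2 = σ p.1
    have h1 : σ p.1 = x₀ := by rw [Subsingleton.elim p.1 (vert 0)]; exact h 0
    rw [h1]
    exact gamma_base x₀ p.2
  hv σ j := gamma_one x₀ (σ (vert j))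

lemma Wd0 [PathConnectedSpace X] (x₀ : X) : Wd 0 (H0 (X := X) x₀) := by
  intro σ y t i j hi hj
  rcases eq_or_ne i j with rfl | hne
  · rfl
  · exfalso
    have h2 : ∀ k : Fin 2, y.1 k = 0 := by
      intro k
      rcases eq_or_ne k i with rfl | hk
      · exact hi
      · have : k = j := by
          apply Fin.ext
          have h1 : (i : ℕ) ≠ (j : ℕ) := fun h => hne (Fin.ext h)
          have h2 : (k : ℕ) ≠ (i : ℕ) := fun h => hk (Fin.ext h)
          have := k.isLt; have := i.isLt; have := j.isLt
          omega
        rw [this]; exact hj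
    have hs := Del.sum_coords y
    have : (1 : ℝ) = 0 := by
      rw [← hs]
      exact Finset.sum_eq_zero fun k _ => h2 k
    simp at this

/-! ### The extension step -/

def extFun (n : ℕ) (H : C(Del n, X) → C(Del n × UI, X)) (σ : C(Del (n+1), X))
    (p : Del (n+1) × UI) : X :=
  if h : ∃ i, ((rho (n+1) p).1).1 i = 0 then
    H (face h.choose σ) (dropF h.choose (rho (n+1) p).1 h.choose_spec, (rho (n+1) p).2)
  else σ (rho (n+1) p).1

variable {x₀ : X} {n : ℕ} {H : C(Del n, X) → C(Del n × UI, X)}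

lemma extFun_of_zero (hW : Wd n H) (σ : C(Del (n+1), X)) (p : Del (n+1) × UI)
    (i : Fin (n+2)) (hi : ((rho (n+1) p).1).1 i = 0) :
    extFun n H σ p = H (face i σ) (dropF i (rho (n+1) p).1 hi, (rho (n+1) p).2) := by
  rw [extFun, dif_pos ⟨i, hi⟩]
  exact hW σ _ _ _ _ _ hi

lemma extFun_of_t0 (hO : Ok x₀ n H) (σ : C(Del (n+1), X)) (p : Del (n+1) × UI)
    (ht : (rho (n+1) p).2 = 0) :
    extFun n H σ p = σ (rho (n+1) p).1 := by
  rw [extFun]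
  split_ifs with h
  · rw [ht, hO.h0]
    show σ (mapδ h.choose (dropF h.choose (rho (n+1) p).1 h.choose_spec)) = _
    rw [mapδ_dropF]
  · rfl

lemma extFun_fixed (hW : Wd n H) (σ : C(Del (n+1), X)) (p : Del (n+1) × UI)
    (i : Fin (n+2)) (hfix : rho (n+1) p = p) (hi : p.1.1 i = 0) :
    extFun n H σ p = H (face i σ) (dropF i p.1 hi, p.2) := by
  have h2 : ((rho (n+1) p).1).1 i = 0 := by rw [hfix]; exact hi
  rw [extFun_of_zero hW σ p i h2]
  have e1 : dropF i (rho (n+1) p).1 h2 = dropF i p.1 hi :=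
    dropF_congr i _ _ (congrArg Prod.fst hfix) h2 hi
  have e2 : ((rho (n+1) p).2) = p.2 := congrArg Prod.snd hfix
  rw [e1, e2]

lemma extFun_continuous (hW : Wd n H) (hO : Ok x₀ n H) (σ : C(Del (n+1), X)) :
    Continuous (extFun n H σ) := by
  set S : Option (Fin (n+2)) → Set (Del (n+1) × UI) :=
    fun o => Option.rec {p | ((rho (n+1) p).2 : ℝ) = 0}
      (fun i => {p | ((rho (n+1) p).1).1 i = 0}) o with hS
  have hrc := (rho (n+1)).continuous
  apply LocallyFinite.continuous (locallyFinite_of_finite S)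
  · -- covers
    rw [Set.eq_univ_iff_forall]
    intro p
    rcases rho_exit (n+1) p with h | ⟨i, hi⟩
    · exact Set.mem_iUnion.2 ⟨none, h⟩
    · exact Set.mem_iUnion.2 ⟨some i, hi⟩
  · -- closed
    intro o
    match o with
    | none =>
      exact isClosed_eq (continuous_subtype_val.comp (continuous_snd.comp hrc)) continuous_const
    | some i =>
      apply isClosed_eq _ continuous_const
      exact (Del.continuous_coord i).comp (continuous_fst.comp hrc)
  · -- continuous on pieces
    intro o
    match o with
    | none =>
      apply ContinuousOn.congr
        ((map_continuous σ).comp (continuous_fst.comp hrc)).continuousOn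
      intro p hp
      exact extFun_of_t0 hO σ p (Subtype.ext hp)
    | some i =>
      rw [continuousOn_iff_continuous_restrict]
      have hres : (S (some i)).domRestrict (extFun n H σ)
          = fun q => (H (face i σ))
              (dropF i (rho (n+1) q.1).1 q.2, (rho (n+1) q.1).2) := by
        funext q
        exact extFun_of_zero hW σ q.1 i q.2
      rw [hres]
      apply (map_continuous (H (face i σ))).comp
      apply Continuous.prodMk
      · apply Continuous.subtype_mk
        apply continuous_pi
        intro a
        exact (Del.continuous_coord (i.succAbove a)).comp
          ((continuous_fst.comp hrc).comp continuous_subtype_val)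
      · exact (continuous_snd.comp hrc).comp continuous_subtype_val

/-- The inductive extension of the system of homotopies. -/
def Hnext (x₀ : X) (n : ℕ) (H : C(Del n, X) → C(Del n × UI, X))
    (hW : Wd n H) (hO : Ok x₀ n H) : C(Del (n+1), X) → C(Del (n+1) × UI, X) :=
  fun σ =>
    if hσ : Pointed x₀ σ then σ.comp ⟨Prod.fst, continuous_fst⟩
    else ⟨extFun n H σ, extFun_continuous hW hO σ⟩

lemma dropF_vert {n : ℕ} (k : Fin (n+2)) (j : Fin (n+2)) (h : (vert j).1 k = 0)
    (a : Fin (n+1)) (ha : k.succAbove a = j) : dropF k (vert j) h = vert a := by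
  apply Del.ext
  intro b
  rw [dropF_coord, vert_coord, vert_coord, ← ha]
  by_cases hb : b = a
  · rw [if_pos hb, if_pos (by rw [hb])]
  · rw [if_neg hb, if_neg (fun hc => hb (k.succAbove_right_injective hc))]

lemma OkNext (hW : Wd n H) (hO : Ok x₀ n H) : Ok x₀ (n+1) (Hnext x₀ n H hW hO) where
  h0 σ x := by
    rw [Hnext]
    split_ifs with hσ
    · rfl
    · show extFun n H σ (x, 0) = σ x
      have hfix : rho (n+1) (x, (0 : UI)) = (x, 0) := rho_fix_t0 rfl
      have ht : (rho (n+1) (x, (0:UI))).2 = 0 := by rw [hfix]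
      rw [extFun_of_t0 hO σ _ ht, hfix]
  hpt σ hσ p := by
    rw [Hnext, dif_pos hσ]
    rfl
  hv σ j := by
    rw [Hnext]
    split_ifs with hσ
    · exact hσ j
    · show extFun n H σ (vert j, 1) = x₀
      obtain ⟨k, hk⟩ := exists_ne j
      have hz : ((vert j, (1:UI)).1).1 k = 0 := by
        rw [vert_coord, if_neg hk]
      have hfix : rho (n+1) (vert j, (1:UI)) = (vert j, 1) := rho_fix_coord0 hz
      rw [extFun_fixed hW σ _ k hfix hz]
      obtain ⟨a, ha⟩ := Fin.exists_succAbove_eq (Ne.symm hk)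
      rw [dropF_vert k j hz a ha]
      exact hO.hv (face k σ) a

lemma CompatNext (hW : Wd n H) (hO : Ok x₀ n H) : Compat n H (Hnext x₀ n H hW hO) := by
  intro σ j y t
  rw [Hnext]
  split_ifs with hσ
  · show σ (mapδ j y) = H (face j σ) (y, t)
    rw [hO.hpt (face j σ) (hσ.face j) (y, t)]
    rfl
  · show extFun n H σ (mapδ j y, t) = H (face j σ) (y, t)
    have hz : ((mapδ j y, t).1).1 j = 0 := mapδ_self j y
    have hfix : rho (n+1) (mapδ j y, t) = (mapδ j y, t) := rho_fix_coord0 hz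
    rw [extFun_fixed hW σ _ j hfix hz]
    rw [dropF_mapδ]

lemma map_comp_apply {l m r : ℕ} (f : SimplexCategory.mk l ⟶ SimplexCategory.mk m)
    (g : SimplexCategory.mk m ⟶ SimplexCategory.mk r) (z : Del l) :
    SimplexCategory.toTop₀.map (f ≫ g) z = SimplexCategory.toTop₀.map g (SimplexCategory.toTop₀.map f z) := by
  rw [SimplexCategory.toTop₀.map_comp]
  rfl

lemma mapδ_comp_apply {l : ℕ} (b : Fin (l+2)) (c : Fin (l+3)) (z : Del l) :
    mapδ c (mapδ b z) = SimplexCategory.toTop₀.map (δ b ≫ δ c) z := by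
  rw [map_comp_apply (δ b) (δ c) z]
  rfl

lemma face_face {l : ℕ} (σ : C(Del (l+2), X)) (b : Fin (l+2)) (c : Fin (l+3)) :
    face b (face c σ) = σ.comp (SimplexCategory.toTop₀.map (δ b ≫ δ c)).hom := by
  apply ContinuousMap.ext
  intro z
  show σ (mapδ c (mapδ b z)) = σ (SimplexCategory.toTop₀.map (δ b ≫ δ c) z)
  rw [map_comp_apply]
  rfl

lemma wd_of_compat {Hh : C(Del (n+1), X) → C(Del (n+1) × UI, X)}
    (hc : Compat n (X := X) H Hh) : Wd (n+1) Hh := by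
  have key : ∀ (σ : C(Del (n+2), X)) (y : Del (n+2)) (t : UI) (i j : Fin (n+3))
      (hij : (i:ℕ) < (j:ℕ)) (hi : y.1 i = 0) (hj : y.1 j = 0),
      Hh (face i σ) (dropF i y hi, t) = Hh (face j σ) (dropF j y hj, t) := by
    intro σ y t i j hij hi hj
    have hne : j ≠ i := fun h => by rw [h] at hij; omega
    obtain ⟨a, ha⟩ := Fin.exists_succAbove_eq hne
    have hy' : (dropF i y hi).1 a = 0 := by rw [dropF_coord, ha]; exact hj
    set w := dropF a (dropF i y hi) hy' with hw
    have h1 : mapδ a w = dropF i y hi := mapδ_dropF _ _ _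
    have hav : (a : ℕ) + 1 = (j : ℕ) := by
      have hv := val_succAbove i a
      rw [ha] at hv
      by_cases hai : (a:ℕ) < (i:ℕ)
      · rw [if_pos hai] at hv; omega
      · rw [if_neg hai] at hv; omega
    have hilt : (i : ℕ) < n + 2 := by have := j.isLt; omega
    set i' : Fin (n+2) := ⟨(i : ℕ), hilt⟩ with hi'
    have hii' : i'.castSucc = i := by apply Fin.ext; rfl
    have hasj : a.succ = j := by apply Fin.ext; exact hav
    have hile : i' ≤ a := by
      rw [Fin.le_def]
      show (i : ℕ) ≤ (a : ℕ)
      omega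
    have hδ : δ a ≫ δ i = δ i' ≫ δ j := by
      rw [← hii', ← hasj]
      exact (SimplexCategory.δ_comp_δ hile).symm
    have hy2 : mapδ j (mapδ i' w) = y := by
      have e1 : mapδ i (mapδ a w) = y := by rw [h1]; exact mapδ_dropF _ _ _
      rw [mapδ_comp_apply, ← hδ, ← mapδ_comp_apply]
      exact e1
    have h3 : dropF j y hj = mapδ i' w := by
      have hz : (mapδ j (mapδ i' w)).1 j = 0 := mapδ_self _ _
      calc dropF j y hj = dropF j (mapδ j (mapδ i' w)) hz :=
            dropF_congr j y _ hy2.symm hj hz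
        _ = mapδ i' w := dropF_mapδ _ _ _
    rw [← h1, h3, hc (face i σ) a w t, hc (face j σ) i' w t]
    rw [face_face, face_face, ← hδ]
  intro σ y t i j hi hj
  rcases lt_trichotomy (i : ℕ) (j : ℕ) with h | h | h
  · exact key σ y t i j h hi hj
  · have : i = j := Fin.ext h
    subst this
    rfl
  · exact (key σ y t j i h hj hi).symm

/-! ### The recursion -/

variable (x₀) in
def Pack (n : ℕ) : Type _ := {H : C(Del n, X) → C(Del n × UI, X) // Ok x₀ n H ∧ Wd n H}

variable (x₀) in
def pack0 [PathConnectedSpace X] : Pack x₀ 0 := ⟨H0 x₀, Ok0 x₀, Wd0 x₀⟩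

variable (x₀) in
def packStep (n : ℕ) (P : Pack x₀ n) : {Q : Pack x₀ (n+1) // Compat n P.1 Q.1} :=
  ⟨⟨Hnext x₀ n P.1 P.2.2 P.2.1,
    OkNext P.2.2 P.2.1,
    wd_of_compat (CompatNext P.2.2 P.2.1)⟩,
   CompatNext P.2.2 P.2.1⟩

variable (x₀) in
def packs [PathConnectedSpace X] : ∀ n : ℕ, Pack x₀ n :=
  fun n => Nat.rec (pack0 x₀) (fun n P => (packStep x₀ n P).1) n

variable (x₀) in
def Hmap [PathConnectedSpace X] (n : ℕ) : C(Del n, X) → C(Del n × UI, X) :=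
  (packs x₀ n).1

lemma Hmap_ok [PathConnectedSpace X] (n : ℕ) : Ok x₀ n (Hmap x₀ n) := (packs x₀ n).2.1

lemma Hmap_compat [PathConnectedSpace X] (n : ℕ) :
    Compat n (Hmap x₀ n) (Hmap x₀ (n+1)) :=
  (packStep x₀ n (packs x₀ n)).2

end

end Eil


namespace Eil

noncomputable section

/-! ### Extended coordinates -/

def cext {m : ℕ} (y : Del m) (k : ℕ) : ℝ := if h : k < m+1 then y.1 ⟨k, h⟩ else 0

lemma cext_inj {m : ℕ} {y z : Del m} (h : ∀ k : ℕ, cext y k = cext z k) : y = z := by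
  apply Del.ext
  intro i
  have hh := h (i : ℕ)
  rw [cext, cext, dif_pos i.isLt, dif_pos i.isLt] at hh
  have e1 : y.1 ⟨(i:ℕ), i.isLt⟩ = y.1 i := coord_congr y rfl
  have e2 : z.1 ⟨(i:ℕ), i.isLt⟩ = z.1 i := coord_congr z rfl
  rw [e1, e2] at hh
  exact hh

lemma cext_big {m : ℕ} (y : Del m) (k : ℕ) (hk : ¬ k < m+1) : cext y k = 0 := dif_neg hk

lemma mapδ_coord' {m : ℕ} (J : Fin (m+2)) (y : Del m) (k : ℕ) (hk : k < m+2) :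
    (mapδ J y).1 ⟨k, hk⟩ =
      if h : k < (J:ℕ) then
        y.1 ⟨k, by have := J.isLt; first | omega | (simp only [SimplexCategory.len_mk]; omega)⟩
      else if h2 : k = (J:ℕ) then 0
      else y.1 ⟨k - 1, by first | omega | (simp only [SimplexCategory.len_mk]; omega)⟩ :=
  mapδ_coord J y ⟨k, hk⟩

lemma cext_mapδ {m : ℕ} (J : Fin (m+2)) (y : Del m) (k : ℕ) :
    cext (mapδ J y) k =
      if k < (J:ℕ) then cext y k else if k = (J:ℕ) then 0 else cext y (k-1) := by
  have hJ := J.isLt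
  by_cases hk : k < m+2
  · rw [show cext (mapδ J y) k = (mapδ J y).1 ⟨k, hk⟩ from dif_pos hk]
    rw [mapδ_coord' J y k hk]
    split_ifs with h1 h2
    · rw [cext, dif_pos (show k < m+1 by omega)]
    · rfl
    · rw [cext, dif_pos (show k - 1 < m+1 by omega)]
  · rw [cext_big _ _ (by omega), if_neg (by omega), if_neg (by omega),
      cext_big _ _ (by omega)]

/-! ### The prism decomposition -/

def prismT {m : ℕ} (i : Fin (m+1)) (w : Del (m+1)) : ℝ :=
  ∑ k : Fin (m+2), if (i:ℕ) < (k:ℕ) then ((w.1 k : ℝ)) else 0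

lemma prismT_nonneg {m : ℕ} (i : Fin (m+1)) (w : Del (m+1)) : 0 ≤ prismT i w :=
  Finset.sum_nonneg fun k _ => by
    split_ifs
    · exact Del.nonneg w k
    · exact le_rfl

lemma sum_coe_coords {m : ℕ} (w : Del m) : ∑ k : Fin (m+1), ((w.1 k : ℝ)) = 1 := by
  exact Del.sum_coords w

lemma prismT_le_one {m : ℕ} (i : Fin (m+1)) (w : Del (m+1)) : prismT i w ≤ 1 := by
  rw [← sum_coe_coords w]
  apply Finset.sum_le_sum
  intro k _
  split_ifs
  · exact le_rfl
  · exact Del.nonneg w k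

def prismX {m : ℕ} (i : Fin (m+1)) (w : Del (m+1)) : Del m :=
  ⟨fun j : Fin (m+1) => (if (j:ℕ) ≤ (i:ℕ) then w.1 j.castSucc else 0)
      + (if (i:ℕ) ≤ (j:ℕ) then w.1 j.succ else 0), by
    show (fun j : Fin (m+1) => (if (j:ℕ) ≤ (i:ℕ) then w.1 j.castSucc else 0)
      + (if (i:ℕ) ≤ (j:ℕ) then w.1 j.succ else 0)) ∈ stdSimplex ℝ (Fin (m + 1))
    refine ⟨fun j => add_nonneg (by split_ifs; exacts [Del.nonneg _ _, le_rfl])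
      (by split_ifs; exacts [Del.nonneg _ _, le_rfl]), ?_⟩
    show (∑ j : Fin (m+1), ((if ((j:ℕ) ≤ (i:ℕ)) then w.1 j.castSucc else 0)
      + (if ((i:ℕ) ≤ (j:ℕ)) then w.1 j.succ else 0))) = 1
    rw [Finset.sum_add_distrib]
    have h1 : (∑ j : Fin (m+1), if ((j:ℕ) ≤ (i:ℕ)) then w.1 j.castSucc else 0)
        = ∑ k : Fin (m+2), if ((k:ℕ) ≤ (i:ℕ)) then w.1 k else 0 := by
      rw [Fin.sum_univ_castSucc (f := fun k : Fin (m+2) => if ((k:ℕ) ≤ (i:ℕ)) then w.1 k else 0)]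
      rw [if_neg (by have := i.isLt; simp only [Fin.val_last]; omega), add_zero]
      exact Finset.sum_congr rfl fun j _ => by rw [Fin.coe_castSucc]
    have h2 : (∑ j : Fin (m+1), if ((i:ℕ) ≤ (j:ℕ)) then w.1 j.succ else 0)
        = ∑ k : Fin (m+2), if (¬ ((k:ℕ) ≤ (i:ℕ))) then w.1 k else 0 := by
      rw [Fin.sum_univ_succ (f := fun k : Fin (m+2) => if (¬ ((k:ℕ) ≤ (i:ℕ))) then w.1 k else 0)]
      rw [if_neg (by simp), zero_add]
      refine Finset.sum_congr rfl fun j _ => ?_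
      refine if_congr ?_ rfl rfl
      simp only [Fin.val_succ]
      omega
    rw [h1, h2, ← Finset.sum_add_distrib]
    rw [Finset.sum_congr rfl (fun k _ => by
      split_ifs with h
      · rw [add_zero]
      · rw [zero_add])]
    exact Del.sum_coords w⟩

def prism (m : ℕ) (i : Fin (m+1)) : C(Del (m+1), Del m × UI) := by
  refine ⟨fun w => (prismX i w, ⟨prismT i w, prismT_nonneg i w, prismT_le_one i w⟩), ?_⟩
  apply Continuous.prodMk
  · apply Continuous.subtype_mk
    apply continuous_pi
    intro j
    apply Continuous.add
    · split_ifs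
      · exact Del.continuous_coord _
      · exact continuous_const
    · split_ifs
      · exact Del.continuous_coord _
      · exact continuous_const
  · apply Continuous.subtype_mk
    apply continuous_finset_sum
    intro k _
    split_ifs
    · exact Del.continuous_coord _
    · exact continuous_const

lemma cext_prismX {m : ℕ} (i : Fin (m+1)) (w : Del (m+1)) (k : ℕ) :
    cext (prismX i w) k =
      (if k ≤ (i:ℕ) then cext w k else 0) + (if (i:ℕ) ≤ k then cext w (k+1) else 0) := by
  have hi := i.isLt
  by_cases hk : k < m+1
  · rw [show cext (prismX i w) k = (prismX i w).1 ⟨k, hk⟩ from dif_pos hk]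
    have e : (prismX i w).1 ⟨k, hk⟩
        = (if k ≤ (i:ℕ) then w.1 (Fin.castSucc ⟨k, hk⟩) else 0)
          + (if (i:ℕ) ≤ k then w.1 (Fin.succ ⟨k, hk⟩) else 0) := rfl
    rw [e]
    congr 1
    · split_ifs with h
      · rw [cext, dif_pos (show k < m+2 by omega)]
        exact coord_congr w rfl
      · rfl
    · split_ifs with h
      · rw [cext, dif_pos (show k+1 < m+2 by omega)]
        exact coord_congr w rfl
      · rfl
  · rw [cext_big _ _ hk, if_neg (by omega), cext_big w (k+1) (by omega), zero_add, ite_self]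

/-! ### Face identities for the prism -/

def topC (m : ℕ) : C(Del m, Del m × UI) := ⟨fun y => (y, 1), by continuity⟩
def botC (m : ℕ) : C(Del m, Del m × UI) := ⟨fun y => (y, 0), by continuity⟩

lemma prismT_mapδ {m : ℕ} (i : Fin (m+1)) (J : Fin (m+2)) (y : Del m) :
    prismT i (mapδ J y)
      = ∑ a : Fin (m+1), if (i:ℕ) < (if (a:ℕ) < (J:ℕ) then (a:ℕ) else (a:ℕ)+1)
          then ((y.1 a : ℝ)) else 0 := by
  rw [prismT, sum_mapδ J y (fun k v => if (i:ℕ) < (k:ℕ) then ((v:ℝ)) else 0)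
    (fun k => by simp)]
  exact Finset.sum_congr rfl fun a _ => by rw [val_succAbove]

lemma prism_comp_δ_zero (m : ℕ) :
    (prism m 0).comp (mapδ 0) = topC m := by
  apply ContinuousMap.ext
  intro y
  show prism m 0 (mapδ 0 y) = (y, 1)
  apply Prod.ext
  · show prismX 0 (mapδ 0 y) = y
    apply cext_inj
    intro k
    by_cases hk : k < m+1
    · simp only [cext_prismX, cext_mapδ, Fin.val_zero]
      split_ifs <;> (try simp only [zero_add, add_zero, Nat.add_sub_cancel]) <;>
        first
          | rfl
          | (exfalso; first | assumption | omega)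
          | (exact congrArg (cext y) (by omega))
          | simp_all
    · rw [show cext (prismX 0 (mapδ 0 y)) k = 0 from cext_big _ _ hk, cext_big y k hk]
  · apply Subtype.ext
    show prismT 0 (mapδ 0 y) = 1
    rw [prismT_mapδ, ← sum_coe_coords y]
    refine Finset.sum_congr rfl fun a _ => ?_
    simp only [Fin.val_zero]
    split_ifs <;> first | rfl | (exfalso; first | assumption | omega)

lemma prism_comp_δ_last (m : ℕ) :
    (prism m (Fin.last m)).comp (mapδ (Fin.last (m+1))) = botC m := by
  apply ContinuousMap.ext
  intro y
  show prism m (Fin.last m) (mapδ (Fin.last (m+1)) y) = (y, 0)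
  apply Prod.ext
  · show prismX (Fin.last m) (mapδ (Fin.last (m+1)) y) = y
    apply cext_inj
    intro k
    by_cases hk : k < m+1
    · simp only [cext_prismX, cext_mapδ, Fin.val_last]
      split_ifs <;> (try simp only [zero_add, add_zero, Nat.add_sub_cancel]) <;>
        first
          | rfl
          | (exfalso; first | assumption | omega)
          | (exact congrArg (cext y) (by omega))
          | (rw [cext_big y (k+1) (by omega)])
          | (rw [cext_big y (k+1) (by omega), cext_big y k (by omega)])
    · rw [show cext (prismX (Fin.last m) (mapδ (Fin.last (m+1)) y)) k = 0 from cext_big _ _ hk,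
        cext_big y k hk]
  · apply Subtype.ext
    show prismT (Fin.last m) (mapδ (Fin.last (m+1)) y) = 0
    rw [prismT_mapδ]
    apply Finset.sum_eq_zero
    intro a _
    have := a.isLt
    simp only [Fin.val_last]
    split_ifs <;> first | rfl | (exfalso; first | assumption | omega)

lemma prism_cancel {m : ℕ} (c : Fin m) :
    (prism m c.castSucc).comp (mapδ c.succ.castSucc)
      = (prism m c.succ).comp (mapδ c.succ.castSucc) := by
  apply ContinuousMap.ext
  intro y
  show prism m c.castSucc (mapδ c.succ.castSucc y) = prism m c.succ (mapδ c.succ.castSucc y)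
  have hc := c.isLt
  apply Prod.ext
  · show prismX c.castSucc (mapδ c.succ.castSucc y) = prismX c.succ (mapδ c.succ.castSucc y)
    apply cext_inj
    intro k
    by_cases hk : k < m+1
    · simp only [cext_prismX, cext_mapδ, Fin.coe_castSucc, Fin.val_succ]
      split_ifs <;> (try simp only [zero_add, add_zero, Nat.add_sub_cancel]) <;>
        first
          | rfl
          | (exfalso; first | assumption | omega)
          | (exact congrArg (cext y) (by omega))
          | (exact congrArg₂ (· + ·) (congrArg (cext y) (by omega)) (congrArg (cext y) (by omega)))
          | (rw [cext_big y (k+1) (by omega)])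
          | (rw [cext_big y (k+1) (by omega), cext_big y k (by omega)])
    · rw [cext_big _ _ hk, cext_big _ _ hk]
  · apply Subtype.ext
    show prismT c.castSucc (mapδ c.succ.castSucc y) = prismT c.succ (mapδ c.succ.castSucc y)
    rw [prismT_mapδ, prismT_mapδ]
    refine Finset.sum_congr rfl fun a _ => ?_
    simp only [Fin.coe_castSucc, Fin.val_succ]
    split_ifs <;> first | rfl | (exfalso; first | assumption | omega)

lemma prism_face_le {n : ℕ} (j : Fin (n+2)) (i' : Fin (n+1)) (h : (j:ℕ) ≤ (i':ℕ)) :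
    (prism (n+1) i'.succ).comp (mapδ j.castSucc)
      = (ContinuousMap.prodMap (mapδ j) (ContinuousMap.id UI)).comp (prism n i') := by
  apply ContinuousMap.ext
  intro y
  show prism (n+1) i'.succ (mapδ j.castSucc y) = (mapδ j (prismX i' y), (prism n i' y).2)
  have hi := i'.isLt
  have hj := j.isLt
  apply Prod.ext
  · show prismX i'.succ (mapδ j.castSucc y) = mapδ j (prismX i' y)
    apply cext_inj
    intro k
    by_cases hk : k < n+2
    · simp only [cext_prismX, cext_mapδ, Fin.coe_castSucc, Fin.val_succ]
      split_ifs <;> (try simp only [zero_add, add_zero, Nat.add_sub_cancel]) <;>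
        first
          | rfl
          | (exfalso; first | assumption | omega)
          | (exact congrArg (cext y) (by omega))
          | (exact congrArg₂ (· + ·) (congrArg (cext y) (by omega)) (congrArg (cext y) (by omega)))
          | (rw [cext_big y (k+1) (by omega)])
          | (rw [cext_big y (k+1) (by omega), cext_big y k (by omega)])
    · rw [cext_big _ _ hk, cext_big _ _ hk]
  · apply Subtype.ext
    show prismT i'.succ (mapδ j.castSucc y) = prismT i' y
    rw [prismT_mapδ, prismT]
    refine Finset.sum_congr rfl fun a _ => ?_
    simp only [Fin.coe_castSucc, Fin.val_succ]
    split_ifs <;> first | rfl | (exfalso; first | assumption | omega)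

lemma prism_face_gt {n : ℕ} (j : Fin (n+2)) (i' : Fin (n+1)) (h : (i':ℕ) < (j:ℕ)) :
    (prism (n+1) i'.castSucc).comp (mapδ j.succ)
      = (ContinuousMap.prodMap (mapδ j) (ContinuousMap.id UI)).comp (prism n i') := by
  apply ContinuousMap.ext
  intro y
  show prism (n+1) i'.castSucc (mapδ j.succ y) = (mapδ j (prismX i' y), (prism n i' y).2)
  have hi := i'.isLt
  have hj := j.isLt
  apply Prod.ext
  · show prismX i'.castSucc (mapδ j.succ y) = mapδ j (prismX i' y)
    apply cext_inj
    intro k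
    by_cases hk : k < n+2
    · simp only [cext_prismX, cext_mapδ, Fin.coe_castSucc, Fin.val_succ]
      split_ifs <;> (try simp only [zero_add, add_zero, Nat.add_sub_cancel]) <;>
        first
          | rfl
          | (exfalso; first | assumption | omega)
          | (exact congrArg (cext y) (by omega))
          | (exact congrArg₂ (· + ·) (congrArg (cext y) (by omega)) (congrArg (cext y) (by omega)))
          | (rw [cext_big y (k+1) (by omega)])
          | (rw [cext_big y (k+1) (by omega), cext_big y k (by omega)])
    · rw [cext_big _ _ hk, cext_big _ _ hk]
  · apply Subtype.ext
    show prismT i'.castSucc (mapδ j.succ y) = prismT i' y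
    rw [prismT_mapδ, prismT]
    refine Finset.sum_congr rfl fun a _ => ?_
    simp only [Fin.coe_castSucc, Fin.val_succ]
    split_ifs <;> first | rfl | (exfalso; first | assumption | omega)

end

end Eil


namespace Eil

noncomputable section

variable {X : TopCat} [PathConnectedSpace X] (x₀ : X)

/-! ### The operators e and s -/

def eMap (n : ℕ) (σ : C(Del n, X)) : C(Del n, X) := (Hmap x₀ n σ).comp (topC n)

def sMap (n : ℕ) (σ : C(Del n, X)) : C(Del (n+1), X) →₀ ℤ :=
  ∑ i : Fin (n+1), ((-1:ℤ)^(i:ℕ)) • Finsupp.single ((Hmap x₀ n σ).comp (prism n i)) 1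

lemma eMap_vert (n : ℕ) (σ : C(Del n, X)) (j : Fin (n+1)) : eMap x₀ n σ (vert j) = x₀ :=
  (Hmap_ok (x₀ := x₀) n).hv σ j

lemma eMap_pointed (n : ℕ) (σ : C(Del n, X)) (h : ∀ j : Fin (n+1), σ (vert j) = x₀) :
    eMap x₀ n σ = σ := by
  apply ContinuousMap.ext
  intro x
  exact (Hmap_ok (x₀ := x₀) n).hpt σ h (x, 1)

lemma Hmap_face (n : ℕ) (σ : C(Del (n+1), X)) (j : Fin (n+2)) :
    Hmap x₀ n (face j σ)
      = (Hmap x₀ (n+1) σ).comp ((mapδ j).prodMap (ContinuousMap.id UI)) := by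
  apply ContinuousMap.ext
  rintro ⟨y, t⟩
  exact (Hmap_compat (x₀ := x₀) n σ j y t).symm

lemma face_eMap (n : ℕ) (σ : C(Del (n+1), X)) (j : Fin (n+2)) :
    face j (eMap x₀ (n+1) σ) = eMap x₀ n (face j σ) := by
  apply ContinuousMap.ext
  intro y
  show Hmap x₀ (n+1) σ (mapδ j y, 1) = Hmap x₀ n (face j σ) (y, 1)
  exact Hmap_compat (x₀ := x₀) n σ j y 1

lemma Hmap_comp_topC (n : ℕ) (σ : C(Del n, X)) :
    (Hmap x₀ n σ).comp (topC n) = eMap x₀ n σ := rfl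

lemma Hmap_comp_botC (n : ℕ) (σ : C(Del n, X)) :
    (Hmap x₀ n σ).comp (botC n) = σ := by
  apply ContinuousMap.ext
  intro x
  exact (Hmap_ok (x₀ := x₀) n).h0 σ x

/-! ### Basic boundary computations -/

variable (X) in
lemma bdryZ_zero (k : ℕ) : bdryZ X k 0 = 0 := by
  simp [bdryZ]

variable (X) in
lemma bdryZ_add (k : ℕ) (c c' : C(Del (k+1), X) →₀ ℤ) :
    bdryZ X k (c + c') = bdryZ X k c + bdryZ X k c' := by
  simp [bdryZ, Finsupp.mapDomain_add, smul_add, Finset.sum_add_distrib]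

variable (X) in
def bdryHom (k : ℕ) : (C(Del (k+1), X) →₀ ℤ) →+ (C(Del k, X) →₀ ℤ) :=
  AddMonoidHom.mk' (bdryZ X k) (bdryZ_add X k)

variable (X) in
lemma bdryZ_finsum {ι : Type*} (k : ℕ) (s : Finset ι) (f : ι → (C(Del (k+1), X) →₀ ℤ)) :
    bdryZ X k (∑ i ∈ s, f i) = ∑ i ∈ s, bdryZ X k (f i) :=
  map_sum (bdryHom X k) f s

variable (X) in
lemma bdryZ_zsmul (k : ℕ) (z : ℤ) (c : C(Del (k+1), X) →₀ ℤ) :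
    bdryZ X k (z • c) = z • bdryZ X k c :=
  map_zsmul (bdryHom X k) z c

variable (X) in
lemma bdryZ_single (k : ℕ) (g : C(Del (k+1), X)) (b : ℤ) :
    bdryZ X k (Finsupp.single g b)
      = ∑ j : Fin (k+2), ((-1:ℤ)^(j:ℕ)) • Finsupp.single (face j g) b := by
  simp [bdryZ, Finsupp.mapDomain_single]

/-! ### s as an additive map -/

def Ssum (k : ℕ) (c : C(Del k, X) →₀ ℤ) : C(Del (k+1), X) →₀ ℤ :=
  c.sum fun σ a => a • sMap x₀ k σ

lemma Ssum_add (k : ℕ) (c c' : C(Del k, X) →₀ ℤ) :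
    Ssum x₀ k (c + c') = Ssum x₀ k c + Ssum x₀ k c' :=
  Finsupp.sum_add_index' (fun σ => by simp) (fun σ b b' => add_smul b b' (sMap x₀ k σ))

def SsumHom (k : ℕ) : (C(Del k, X) →₀ ℤ) →+ (C(Del (k+1), X) →₀ ℤ) :=
  AddMonoidHom.mk' (Ssum x₀ k) (Ssum_add x₀ k)

lemma Ssum_zero (k : ℕ) : Ssum x₀ k (0 : C(Del k, X) →₀ ℤ) = 0 :=
  map_zero (SsumHom x₀ k)

lemma Ssum_finsum {ι : Type*} (k : ℕ) (s : Finset ι) (f : ι → (C(Del k, X) →₀ ℤ)) :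
    Ssum x₀ k (∑ i ∈ s, f i) = ∑ i ∈ s, Ssum x₀ k (f i) :=
  map_sum (SsumHom x₀ k) f s

lemma Ssum_single (k : ℕ) (σ : C(Del k, X)) (b : ℤ) :
    Ssum x₀ k (Finsupp.single σ b) = b • sMap x₀ k σ :=
  Finsupp.sum_single_index (by simp)

/-! ### support bound -/

lemma sMap_card (k : ℕ) (σ : C(Del k, X)) : (sMap x₀ k σ).support.card ≤ k + 1 := by
  classical
  have h1 : (sMap x₀ k σ).support
      ⊆ Finset.univ.biUnion (fun i : Fin (k+1) =>
        (((-1:ℤ)^(i:ℕ)) • Finsupp.single ((Hmap x₀ k σ).comp (prism k i)) (1:ℤ)).support) := by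
    rw [sMap]
    exact Finsupp.support_finset_sum
  calc (sMap x₀ k σ).support.card
      ≤ ∑ i : Fin (k+1),
        ((((-1:ℤ)^(i:ℕ)) • Finsupp.single ((Hmap x₀ k σ).comp (prism k i)) (1:ℤ)).support).card :=
        le_trans (Finset.card_le_card h1) (Finset.card_biUnion_le)
    _ ≤ ∑ _i : Fin (k+1), 1 := by
        apply Finset.sum_le_sum
        intro i _
        have h2 : (((-1:ℤ)^(i:ℕ)) • Finsupp.single ((Hmap x₀ k σ).comp (prism k i)) (1:ℤ)).support
            ⊆ {((Hmap x₀ k σ).comp (prism k i))} := by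
          refine subset_trans (Finsupp.support_smul) ?_
          exact Finsupp.support_single_subset
        exact le_trans (Finset.card_le_card h2) (by simp)
    _ = k + 1 := by simp

/-! ### the two double sums -/

def Fterm (n : ℕ) (σ : C(Del (n+1), X)) (p : Fin (n+2) × Fin (n+3)) :
    C(Del (n+1), X) →₀ ℤ :=
  ((-1:ℤ)^((p.1:ℕ)+(p.2:ℕ))) •
    Finsupp.single ((Hmap x₀ (n+1) σ).comp ((prism (n+1) p.1).comp (mapδ p.2))) 1

def Uterm (n : ℕ) (σ : C(Del (n+1), X)) (q : Fin (n+2) × Fin (n+1)) :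
    C(Del (n+1), X) →₀ ℤ :=
  ((-1:ℤ)^((q.1:ℕ)+(q.2:ℕ))) •
    Finsupp.single ((Hmap x₀ (n+1) σ).comp
      (((mapδ q.1).prodMap (ContinuousMap.id UI)).comp (prism n q.2))) 1

lemma face_comp {n : ℕ} {A : Type*} [TopologicalSpace A] (ψ : C(A, X))
    (q : C(Del (n+1), A)) (j : Fin (n+2)) :
    face j (ψ.comp q) = ψ.comp (q.comp (mapδ j)) := rfl

lemma step_A (n : ℕ) (σ : C(Del (n+1), X)) :
    bdryZ X (n+1) (sMap x₀ (n+1) σ) = ∑ p : Fin (n+2) × Fin (n+3), Fterm x₀ n σ p := by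
  rw [sMap, bdryZ_finsum, Fintype.sum_prod_type]
  refine Finset.sum_congr rfl fun i _ => ?_
  rw [bdryZ_zsmul, bdryZ_single, Finset.smul_sum]
  refine Finset.sum_congr rfl fun j _ => ?_
  rw [face_comp, smul_smul, Fterm, ← pow_add]

lemma step_B (n : ℕ) (σ : C(Del (n+1), X)) :
    (∑ j : Fin (n+2), ((-1:ℤ)^(j:ℕ)) • sMap x₀ n (face j σ))
      = ∑ q : Fin (n+2) × Fin (n+1), Uterm x₀ n σ q := by
  rw [Fintype.sum_prod_type]
  refine Finset.sum_congr rfl fun j _ => ?_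
  rw [sMap, Finset.smul_sum]
  refine Finset.sum_congr rfl fun i' _ => ?_
  rw [Hmap_face, smul_smul, Uterm, ← pow_add, ContinuousMap.comp_assoc]

lemma U_eq_le (n : ℕ) (σ : C(Del (n+1), X)) (q : Fin (n+2) × Fin (n+1))
    (h : (q.1:ℕ) ≤ (q.2:ℕ)) :
    Uterm x₀ n σ q = - Fterm x₀ n σ (q.2.succ, q.1.castSucc) := by
  rw [Uterm, Fterm]
  have hmap : ((mapδ q.1).prodMap (ContinuousMap.id UI)).comp (prism n q.2)
      = (prism (n+1) q.2.succ).comp (mapδ q.1.castSucc) := (prism_face_le q.1 q.2 h).symm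
  rw [hmap]
  have hsign : ((-1:ℤ)^(((q.2.succ : Fin (n+2)):ℕ) + ((q.1.castSucc : Fin (n+3)):ℕ)))
      = - ((-1:ℤ)^((q.1:ℕ)+(q.2:ℕ))) := by
    simp only [Fin.val_succ, Fin.coe_castSucc]
    rw [show (q.2:ℕ) + 1 + (q.1:ℕ) = ((q.1:ℕ) + (q.2:ℕ)) + 1 by omega, pow_succ]
    ring
  rw [hsign, neg_smul, neg_neg]

lemma U_eq_gt (n : ℕ) (σ : C(Del (n+1), X)) (q : Fin (n+2) × Fin (n+1))
    (h : (q.2:ℕ) < (q.1:ℕ)) :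
    Uterm x₀ n σ q = - Fterm x₀ n σ (q.2.castSucc, q.1.succ) := by
  rw [Uterm, Fterm]
  have hmap : ((mapδ q.1).prodMap (ContinuousMap.id UI)).comp (prism n q.2)
      = (prism (n+1) q.2.castSucc).comp (mapδ q.1.succ) := (prism_face_gt q.1 q.2 h).symm
  rw [hmap]
  have hsign : ((-1:ℤ)^(((q.2.castSucc : Fin (n+2)):ℕ) + ((q.1.succ : Fin (n+3)):ℕ)))
      = - ((-1:ℤ)^((q.1:ℕ)+(q.2:ℕ))) := by
    simp only [Fin.val_succ, Fin.coe_castSucc]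
    rw [show (q.2:ℕ) + ((q.1:ℕ) + 1) = ((q.1:ℕ) + (q.2:ℕ)) + 1 by omega, pow_succ]
    ring
  rw [hsign, neg_smul, neg_neg]

end

end Eil


namespace Eil

noncomputable section

variable {X : TopCat} [PathConnectedSpace X] (x₀ : X)

lemma sign_even (a : ℕ) : ((-1:ℤ)^(a+a)) = 1 := by
  rw [show a + a = 2*a by omega, pow_mul]
  norm_num

lemma sign_odd (a : ℕ) : ((-1:ℤ)^(a+(a+1))) = -1 := by
  rw [show a + (a+1) = 2*a+1 by omega, pow_succ, pow_mul]
  norm_num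

lemma core (n : ℕ) (σ : C(Del (n+1), X)) :
    bdryZ X (n+1) (sMap x₀ (n+1) σ)
      + ∑ j : Fin (n+2), ((-1:ℤ)^(j:ℕ)) • sMap x₀ n (face j σ)
      = Finsupp.single (eMap x₀ (n+1) σ) 1 - Finsupp.single σ 1 := by
  classical
  rw [step_A, step_B]
  -- breaking the F-sum in three pieces
  have hsplit : ∑ p : Fin (n+2) × Fin (n+3), Fterm x₀ n σ p
      = (∑ p ∈ Finset.univ.filter (fun p : Fin (n+2) × Fin (n+3) => (p.2:ℕ) < (p.1:ℕ)),
          Fterm x₀ n σ p)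
        + ((∑ p ∈ Finset.univ.filter
              (fun p : Fin (n+2) × Fin (n+3) => ¬ (p.2:ℕ) < (p.1:ℕ) ∧ (p.1:ℕ)+1 < (p.2:ℕ)),
            Fterm x₀ n σ p)
          + (∑ p ∈ Finset.univ.filter
              (fun p : Fin (n+2) × Fin (n+3) => ¬ (p.2:ℕ) < (p.1:ℕ) ∧ ¬ (p.1:ℕ)+1 < (p.2:ℕ)),
            Fterm x₀ n σ p)) := by
    rw [← Finset.sum_filter_add_sum_filter_not Finset.univ
      (fun p : Fin (n+2) × Fin (n+3) => (p.2:ℕ) < (p.1:ℕ)) (Fterm x₀ n σ)]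
    congr 1
    rw [← Finset.sum_filter_add_sum_filter_not
      (Finset.univ.filter (fun p : Fin (n+2) × Fin (n+3) => ¬ (p.2:ℕ) < (p.1:ℕ)))
      (fun p : Fin (n+2) × Fin (n+3) => (p.1:ℕ)+1 < (p.2:ℕ)) (Fterm x₀ n σ)]
    rw [Finset.filter_filter, Finset.filter_filter]
  -- breaking the U-sum in two pieces
  have hUsplit : ∑ q : Fin (n+2) × Fin (n+1), Uterm x₀ n σ q
      = (∑ q ∈ Finset.univ.filter (fun q : Fin (n+2) × Fin (n+1) => (q.1:ℕ) ≤ (q.2:ℕ)),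
          Uterm x₀ n σ q)
        + (∑ q ∈ Finset.univ.filter (fun q : Fin (n+2) × Fin (n+1) => ¬ (q.1:ℕ) ≤ (q.2:ℕ)),
          Uterm x₀ n σ q) := by
    rw [← Finset.sum_filter_add_sum_filter_not Finset.univ
      (fun q : Fin (n+2) × Fin (n+1) => (q.1:ℕ) ≤ (q.2:ℕ)) (Uterm x₀ n σ)]
  -- first cancellation
  have hb1 : (∑ q ∈ Finset.univ.filter (fun q : Fin (n+2) × Fin (n+1) => (q.1:ℕ) ≤ (q.2:ℕ)),
        Uterm x₀ n σ q)
      = - ∑ p ∈ Finset.univ.filter (fun p : Fin (n+2) × Fin (n+3) => (p.2:ℕ) < (p.1:ℕ)),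
          Fterm x₀ n σ p := by
    rw [← Finset.sum_neg_distrib]
    apply Finset.sum_nbij' (i := fun q : Fin (n+2) × Fin (n+1) => (q.2.succ, q.1.castSucc))
      (j := fun p : Fin (n+2) × Fin (n+3) =>
        ((⟨min (p.2:ℕ) (n+1), by omega⟩ : Fin (n+2)),
         (⟨(p.1:ℕ) - 1, by have := p.1.isLt; omega⟩ : Fin (n+1))))
    · intro q hq
      simp only [Finset.mem_filter, Finset.mem_univ, true_and] at hq ⊢
      simp only [Fin.val_succ, Fin.coe_castSucc]
      omega
    · intro p hp
      simp only [Finset.mem_filter, Finset.mem_univ, true_and] at hp ⊢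
      have := p.1.isLt
      have := p.2.isLt
      omega
    · intro q hq
      simp only [Finset.mem_filter, Finset.mem_univ, true_and] at hq
      have h1 := q.1.isLt
      have h2 := q.2.isLt
      refine Prod.ext ?_ ?_ <;> apply Fin.ext <;>
        simp only [Fin.val_succ, Fin.coe_castSucc] <;> omega
    · intro p hp
      simp only [Finset.mem_filter, Finset.mem_univ, true_and] at hp
      have h1 := p.1.isLt
      have h2 := p.2.isLt
      refine Prod.ext ?_ ?_ <;> apply Fin.ext <;>
        simp only [Fin.val_succ, Fin.coe_castSucc] <;> omega
    · intro q hq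
      simp only [Finset.mem_filter, Finset.mem_univ, true_and] at hq
      exact U_eq_le x₀ n σ q hq
  -- second cancellation
  have hb2 : (∑ q ∈ Finset.univ.filter (fun q : Fin (n+2) × Fin (n+1) => ¬ (q.1:ℕ) ≤ (q.2:ℕ)),
        Uterm x₀ n σ q)
      = - ∑ p ∈ Finset.univ.filter
            (fun p : Fin (n+2) × Fin (n+3) => ¬ (p.2:ℕ) < (p.1:ℕ) ∧ (p.1:ℕ)+1 < (p.2:ℕ)),
          Fterm x₀ n σ p := by
    rw [← Finset.sum_neg_distrib]
    apply Finset.sum_nbij' (i := fun q : Fin (n+2) × Fin (n+1) => (q.2.castSucc, q.1.succ))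
      (j := fun p : Fin (n+2) × Fin (n+3) =>
        ((⟨(p.2:ℕ) - 1, by have := p.2.isLt; omega⟩ : Fin (n+2)),
         (⟨min (p.1:ℕ) n, by omega⟩ : Fin (n+1))))
    · intro q hq
      simp only [Finset.mem_filter, Finset.mem_univ, true_and] at hq ⊢
      simp only [Fin.val_succ, Fin.coe_castSucc]
      omega
    · intro p hp
      simp only [Finset.mem_filter, Finset.mem_univ, true_and] at hp ⊢
      have := p.1.isLt
      have := p.2.isLt
      omega
    · intro q hq
      simp only [Finset.mem_filter, Finset.mem_univ, true_and] at hq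
      have h1 := q.1.isLt
      have h2 := q.2.isLt
      refine Prod.ext ?_ ?_ <;> apply Fin.ext <;>
        simp only [Fin.val_succ, Fin.coe_castSucc] <;> omega
    · intro p hp
      simp only [Finset.mem_filter, Finset.mem_univ, true_and] at hp
      have h1 := p.1.isLt
      have h2 := p.2.isLt
      refine Prod.ext ?_ ?_ <;> apply Fin.ext <;>
        simp only [Fin.val_succ, Fin.coe_castSucc] <;> omega
    · intro q hq
      simp only [Finset.mem_filter, Finset.mem_univ, true_and] at hq
      exact U_eq_gt x₀ n σ q (by omega)
  -- the diagonal part: telescoping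
  have hdiag : (∑ p ∈ Finset.univ.filter
        (fun p : Fin (n+2) × Fin (n+3) => ¬ (p.2:ℕ) < (p.1:ℕ) ∧ ¬ (p.1:ℕ)+1 < (p.2:ℕ)),
      Fterm x₀ n σ p)
      = Finsupp.single (eMap x₀ (n+1) σ) 1 - Finsupp.single σ 1 := by
    have hsplit2 : (∑ p ∈ Finset.univ.filter
          (fun p : Fin (n+2) × Fin (n+3) => ¬ (p.2:ℕ) < (p.1:ℕ) ∧ ¬ (p.1:ℕ)+1 < (p.2:ℕ)),
        Fterm x₀ n σ p)
        = (∑ p ∈ Finset.univ.filter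
            (fun p : Fin (n+2) × Fin (n+3) =>
              (¬ (p.2:ℕ) < (p.1:ℕ) ∧ ¬ (p.1:ℕ)+1 < (p.2:ℕ)) ∧ (p.2:ℕ) = (p.1:ℕ)),
          Fterm x₀ n σ p)
          + (∑ p ∈ Finset.univ.filter
              (fun p : Fin (n+2) × Fin (n+3) =>
                (¬ (p.2:ℕ) < (p.1:ℕ) ∧ ¬ (p.1:ℕ)+1 < (p.2:ℕ)) ∧ ¬ (p.2:ℕ) = (p.1:ℕ)),
            Fterm x₀ n σ p) := by
      rw [← Finset.sum_filter_add_sum_filter_not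
        (Finset.univ.filter (fun p : Fin (n+2) × Fin (n+3) =>
          ¬ (p.2:ℕ) < (p.1:ℕ) ∧ ¬ (p.1:ℕ)+1 < (p.2:ℕ)))
        (fun p : Fin (n+2) × Fin (n+3) => (p.2:ℕ) = (p.1:ℕ)) (Fterm x₀ n σ)]
      rw [Finset.filter_filter, Finset.filter_filter]
    rw [hsplit2]
    have hD1 : (∑ p ∈ Finset.univ.filter
          (fun p : Fin (n+2) × Fin (n+3) =>
            (¬ (p.2:ℕ) < (p.1:ℕ) ∧ ¬ (p.1:ℕ)+1 < (p.2:ℕ)) ∧ (p.2:ℕ) = (p.1:ℕ)),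
        Fterm x₀ n σ p)
        = ∑ i : Fin (n+2), Fterm x₀ n σ (i, i.castSucc) := by
      apply Finset.sum_nbij' (i := fun p : Fin (n+2) × Fin (n+3) => p.1)
        (j := fun i : Fin (n+2) => (i, i.castSucc))
      · intro p _; exact Finset.mem_univ _
      · intro i _
        simp only [Finset.mem_filter, Finset.mem_univ, true_and]
        refine ⟨⟨?_, ?_⟩, ?_⟩ <;> (try simp only [Fin.coe_castSucc]) <;> omega
      · intro p hp
        simp only [Finset.mem_filter, Finset.mem_univ, true_and] at hp
        refine Prod.ext rfl (Fin.ext ?_)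
        simp only [Fin.coe_castSucc]
        omega
      · intro i _; rfl
      · intro p hp
        simp only [Finset.mem_filter, Finset.mem_univ, true_and] at hp
        congr 1
        refine Prod.ext rfl (Fin.ext ?_)
        simp only [Fin.coe_castSucc]
        omega
    have hD2 : (∑ p ∈ Finset.univ.filter
          (fun p : Fin (n+2) × Fin (n+3) =>
            (¬ (p.2:ℕ) < (p.1:ℕ) ∧ ¬ (p.1:ℕ)+1 < (p.2:ℕ)) ∧ ¬ (p.2:ℕ) = (p.1:ℕ)),
        Fterm x₀ n σ p)
        = ∑ i : Fin (n+2), Fterm x₀ n σ (i, i.succ) := by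
      apply Finset.sum_nbij' (i := fun p : Fin (n+2) × Fin (n+3) => p.1)
        (j := fun i : Fin (n+2) => (i, i.succ))
      · intro p _; exact Finset.mem_univ _
      · intro i _
        simp only [Finset.mem_filter, Finset.mem_univ, true_and]
        refine ⟨⟨?_, ?_⟩, ?_⟩ <;> (try simp only [Fin.val_succ]) <;> omega
      · intro p hp
        simp only [Finset.mem_filter, Finset.mem_univ, true_and] at hp
        refine Prod.ext rfl (Fin.ext ?_)
        simp only [Fin.val_succ]
        omega
      · intro i _; rfl
      · intro p hp
        simp only [Finset.mem_filter, Finset.mem_univ, true_and] at hp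
        congr 1
        refine Prod.ext rfl (Fin.ext ?_)
        simp only [Fin.val_succ]
        omega
    rw [hD1, hD2]
    -- telescoping
    have hF1 : ∀ i : Fin (n+2), Fterm x₀ n σ (i, i.castSucc)
        = Finsupp.single
            ((Hmap x₀ (n+1) σ).comp ((prism (n+1) i).comp (mapδ i.castSucc))) 1 := by
      intro i
      rw [Fterm]
      simp only [Fin.coe_castSucc]
      rw [sign_even, one_smul]
    have hF2 : ∀ i : Fin (n+2), Fterm x₀ n σ (i, i.succ)
        = - Finsupp.single
            ((Hmap x₀ (n+1) σ).comp ((prism (n+1) i).comp (mapδ i.succ))) 1 := by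
      intro i
      rw [Fterm]
      simp only [Fin.val_succ]
      rw [sign_odd, neg_smul, one_smul]
    rw [Finset.sum_congr rfl (fun i _ => hF1 i), Finset.sum_congr rfl (fun i _ => hF2 i)]
    rw [Finset.sum_neg_distrib]
    rw [Fin.sum_univ_succ (f := fun i : Fin (n+2) => Finsupp.single
      ((Hmap x₀ (n+1) σ).comp ((prism (n+1) i).comp (mapδ i.castSucc))) (1:ℤ))]
    rw [Fin.sum_univ_castSucc (f := fun i : Fin (n+2) => Finsupp.single
      ((Hmap x₀ (n+1) σ).comp ((prism (n+1) i).comp (mapδ i.succ))) (1:ℤ))]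
    have hGH : ∀ c : Fin (n+1),
        Finsupp.single
          ((Hmap x₀ (n+1) σ).comp ((prism (n+1) c.castSucc).comp (mapδ c.castSucc.succ))) (1:ℤ)
        = Finsupp.single
          ((Hmap x₀ (n+1) σ).comp ((prism (n+1) c.succ).comp (mapδ c.succ.castSucc))) (1:ℤ) := by
      intro c
      rw [Fin.succ_castSucc, prism_cancel]
    rw [Finset.sum_congr rfl (fun c _ => hGH c)]
    have hG0 : Finsupp.single
        ((Hmap x₀ (n+1) σ).comp ((prism (n+1) (0 : Fin (n+2))).comp
          (mapδ ((0 : Fin (n+2)).castSucc)))) (1:ℤ)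
        = Finsupp.single (eMap x₀ (n+1) σ) 1 := by
      rw [Fin.castSucc_zero, prism_comp_δ_zero, Hmap_comp_topC]
    have hHlast : Finsupp.single
        ((Hmap x₀ (n+1) σ).comp ((prism (n+1) (Fin.last (n+1))).comp
          (mapδ ((Fin.last (n+1)).succ)))) (1:ℤ)
        = Finsupp.single σ 1 := by
      rw [Fin.succ_last, prism_comp_δ_last, Hmap_comp_botC]
    rw [hG0, hHlast]
    abel
  rw [hsplit, hUsplit, hb1, hb2, hdiag]
  abel

end

end Eil


namespace Eil

noncomputable section

variable {X : TopCat} [PathConnectedSpace X] (x₀ : X)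

lemma mapDomain_finsum {α β M : Type*} [AddCommMonoid M] {ι : Type*} (φ : α → β)
    (s : Finset ι) (f : ι → (α →₀ M)) :
    Finsupp.mapDomain φ (∑ i ∈ s, f i) = ∑ i ∈ s, Finsupp.mapDomain φ (f i) :=
  map_sum (Finsupp.mapDomain.addMonoidHom φ) f s

lemma clause3 (n : ℕ) (c : C(Del (n + 1), X) →₀ ℤ) :
    bdryZ X n (Finsupp.mapDomain (eMap x₀ (n+1)) c)
      = Finsupp.mapDomain (eMap x₀ n) (bdryZ X n c) := by
  induction c using Finsupp.induction_linear with
  | zero => rw [Finsupp.mapDomain_zero, bdryZ_zero, Finsupp.mapDomain_zero]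
  | add f g hf hg =>
    rw [Finsupp.mapDomain_add, bdryZ_add, bdryZ_add, Finsupp.mapDomain_add, hf, hg]
  | single σ b =>
    rw [Finsupp.mapDomain_single, bdryZ_single, bdryZ_single, mapDomain_finsum]
    refine Finset.sum_congr rfl fun j _ => ?_
    rw [Finsupp.mapDomain_smul, Finsupp.mapDomain_single, face_eMap]

lemma core0 (σ : C(Del 0, X)) :
    bdryZ X 0 (sMap x₀ 0 σ)
      = Finsupp.single (eMap x₀ 0 σ) 1 - Finsupp.single σ 1 := by
  rw [sMap, Fin.sum_univ_one]
  have h0 : (((0 : Fin 1) : ℕ)) = 0 := rfl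
  rw [h0, pow_zero, one_smul, bdryZ_single, Fin.sum_univ_two]
  have e0 : face (0 : Fin 2) ((Hmap x₀ 0 σ).comp (prism 0 0)) = eMap x₀ 0 σ := by
    rw [face_comp, prism_comp_δ_zero, Hmap_comp_topC]
  have e1 : face (1 : Fin 2) ((Hmap x₀ 0 σ).comp (prism 0 0)) = σ := by
    rw [face_comp]
    rw [show (1 : Fin 2) = Fin.last 1 from rfl, show (0 : Fin 1) = Fin.last 0 from rfl]
    rw [prism_comp_δ_last, Hmap_comp_botC]
  rw [e0, e1]
  norm_num
  abel

lemma clause5 (c : C(Del 0, X) →₀ ℤ) :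
    bdryZ X 0 (Ssum x₀ 0 c) = Finsupp.mapDomain (eMap x₀ 0) c - c := by
  induction c using Finsupp.induction_linear with
  | zero => rw [Ssum_zero, bdryZ_zero, Finsupp.mapDomain_zero, sub_zero]
  | add f g hf hg =>
    rw [Ssum_add, bdryZ_add, Finsupp.mapDomain_add, hf, hg]
    abel
  | single σ b =>
    rw [Ssum_single, bdryZ_zsmul, core0, Finsupp.mapDomain_single, smul_sub,
      Finsupp.smul_single, Finsupp.smul_single, smul_eq_mul, mul_one]

lemma clause6 (n : ℕ) (c : C(Del (n+1), X) →₀ ℤ) :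
    bdryZ X (n+1) (Ssum x₀ (n+1) c) + Ssum x₀ n (bdryZ X n c)
      = Finsupp.mapDomain (eMap x₀ (n+1)) c - c := by
  induction c using Finsupp.induction_linear with
  | zero =>
    rw [Ssum_zero, bdryZ_zero, bdryZ_zero, Ssum_zero, Finsupp.mapDomain_zero]
    simp
  | add f g hf hg =>
    rw [Ssum_add, bdryZ_add, bdryZ_add, Ssum_add, Finsupp.mapDomain_add]
    rw [eq_sub_iff_add_eq] at hf hg ⊢
    rw [← hf, ← hg]
    abel
  | single σ b =>
    rw [Ssum_single, bdryZ_zsmul, bdryZ_single, Ssum_finsum, Finsupp.mapDomain_single]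
    have hterm : ∀ j : Fin (n+2),
        Ssum x₀ n (((-1:ℤ)^(j:ℕ)) • Finsupp.single (face j σ) b)
          = b • (((-1:ℤ)^(j:ℕ)) • sMap x₀ n (face j σ)) := by
      intro j
      rw [Finsupp.smul_single, smul_eq_mul, Ssum_single, mul_comm, mul_smul]
    rw [Finset.sum_congr rfl fun j _ => hterm j, ← Finset.smul_sum, ← smul_add, core]
    rw [smul_sub, Finsupp.smul_single, Finsupp.smul_single, smul_eq_mul, mul_one]

end

end Eil


/-- **Eilenberg.** For a path-connected space `X` with basepoint `x₀` there
are a chain map `η` (given simplexwise by `e`, sending each simplex to a single simplex with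
all vertices at `x₀`, and fixing simplices which already have all vertices at `x₀`, so that
`η ∘ ι = id`) and a chain homotopy `s` (sending each `k`-simplex to a chain of at most
`k+1` simplices) with `∂s + s∂ = ιη − id`. -/
theorem eilenberg_pointed_chain_homotopy
    (X : TopCat) [PathConnectedSpace X] (x₀ : X) :
    ∃ (e : ∀ n : ℕ, C(Del n, X) → C(Del n, X))
      (s : ∀ n : ℕ, C(Del n, X) → (C(Del (n + 1), X) →₀ ℤ)),
      -- η takes values in simplices with all vertices at x₀
      (∀ (n : ℕ) (σ : C(Del n, X)) (j : Fin (n + 1)), e n σ (vert j) = x₀) ∧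
      -- η ∘ ι = id
      (∀ (n : ℕ) (σ : C(Del n, X)),
        (∀ j : Fin (n + 1), σ (vert j) = x₀) → e n σ = σ) ∧
      -- η is a chain map
      (∀ (n : ℕ) (c : C(Del (n + 1), X) →₀ ℤ),
        bdryZ X n (Finsupp.mapDomain (e (n + 1)) c) =
          Finsupp.mapDomain (e n) (bdryZ X n c)) ∧
      -- s sends a k-simplex to a sum of at most k+1 simplices
      (∀ (n : ℕ) (σ : C(Del n, X)), (s n σ).support.card ≤ n + 1) ∧
      -- ∂ s = ι η − id in degree 0
      (∀ c : C(Del 0, X) →₀ ℤ,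
        bdryZ X 0 (c.sum fun σ a => a • s 0 σ) =
          Finsupp.mapDomain (e 0) c - c) ∧
      -- ∂ s + s ∂ = ι η − id in positive degrees
      (∀ (n : ℕ) (c : C(Del (n + 1), X) →₀ ℤ),
        bdryZ X (n + 1) (c.sum fun σ a => a • s (n + 1) σ)
          + (bdryZ X n c).sum (fun σ a => a • s n σ)
          = Finsupp.mapDomain (e (n + 1)) c - c) := by
  refine ⟨fun n => Eil.eMap x₀ n, fun n => Eil.sMap x₀ n, ?_, ?_, ?_, ?_, ?_, ?_⟩
  · exact fun n σ j => Eil.eMap_vert x₀ n σ j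
  · exact fun n σ h => Eil.eMap_pointed x₀ n σ h
  · exact fun n c => Eil.clause3 x₀ n c
  · exact fun n σ => Eil.sMap_card x₀ n σ
  · exact fun c => Eil.clause5 x₀ c
  · exact fun n c => Eil.clause6 x₀ n c
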